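/- arXiv:2604.16750 — 4 statements merged into one kernel-verified Lean document; each statement's English description precedes it below -/
import Mathlib

section
/- Let d ≥ 1, a ∈ ℂ with a ≠ 0, and let c± = a·(2d+1+|a|² ± √Δ_a)/(2(d+1)|a|²) with Δ_a = (|a|²−(2d+1)²)(|a|²−1) be the roots of h(z) = ā(d+1)z² − (2d+1+|a|²)z + a(d+1). If 1 ≤ |a| ≤ 2d+1 then |c₊| = |c₋| = 1; moreover c₊ = c₋ if and only if |a| = 1 or |a| = 2d+1. -/
/-- For `1 ≤ |a| ≤ 2d+1` the free critical points `c±` of `B_a` (roots of the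
quadratic `h`) lie on the unit circle, and they coincide iff `|a| = 1` or
`|a| = 2d+1`. -/
theorem stmt6 (d : ℕ) (hd : 1 ≤ d) (a : ℂ) (ha : a ≠ 0)
    (h1 : 1 ≤ ‖a‖) (h2 : ‖a‖ ≤ 2 * d + 1) :
    let Δ : ℝ := (‖a‖ ^ 2 - (2 * (d : ℝ) + 1) ^ 2) * (‖a‖ ^ 2 - 1)
    let s : ℂ := Complex.I * (Real.sqrt (-Δ) : ℝ)
    let cp : ℂ := a * (((2 * (d : ℝ) + 1 + ‖a‖ ^ 2 : ℝ) : ℂ) + s) /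
      (2 * ((d : ℂ) + 1) * ((‖a‖ ^ 2 : ℝ) : ℂ))
    let cm : ℂ := a * (((2 * (d : ℝ) + 1 + ‖a‖ ^ 2 : ℝ) : ℂ) - s) /
      (2 * ((d : ℂ) + 1) * ((‖a‖ ^ 2 : ℝ) : ℂ))
    (starRingEnd ℂ a * ((d : ℂ) + 1) * cp ^ 2
        - ((2 * (d : ℝ) + 1 + ‖a‖ ^ 2 : ℝ) : ℂ) * cp + a * ((d : ℂ) + 1) = 0) ∧
    (starRingEnd ℂ a * ((d : ℂ) + 1) * cm ^ 2
        - ((2 * (d : ℝ) + 1 + ‖a‖ ^ 2 : ℝ) : ℂ) * cm + a * ((d : ℂ) + 1) = 0) ∧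
    ‖cp‖ = 1 ∧ ‖cm‖ = 1 ∧
    (cp = cm ↔ ‖a‖ = 1 ∨ ‖a‖ = 2 * d + 1) := by
  intro Δ s cp cm
  have hΔdef : Δ = (‖a‖ ^ 2 - (2 * (d : ℝ) + 1) ^ 2) * (‖a‖ ^ 2 - 1) := rfl
  have hsdef : s = Complex.I * (Real.sqrt (-Δ) : ℝ) := rfl
  have hcpdef : cp = a * (((2 * (d : ℝ) + 1 + ‖a‖ ^ 2 : ℝ) : ℂ) + s) /
      (2 * ((d : ℂ) + 1) * ((‖a‖ ^ 2 : ℝ) : ℂ)) := rfl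
  have hcmdef : cm = a * (((2 * (d : ℝ) + 1 + ‖a‖ ^ 2 : ℝ) : ℂ) - s) /
      (2 * ((d : ℂ) + 1) * ((‖a‖ ^ 2 : ℝ) : ℂ)) := rfl
  clear_value Δ s cp cm
  set A : ℂ := ((‖a‖ : ℝ) : ℂ) with hA
  have hr0 : 0 < ‖a‖ := norm_pos_iff.mpr ha
  have hΔ0 : 0 ≤ -Δ := by
    rw [hΔdef]
    have e1 : (0:ℝ) ≤ (2 * (d:ℝ) + 1) ^ 2 - ‖a‖ ^ 2 := by nlinarith
    have e2 : (0:ℝ) ≤ ‖a‖ ^ 2 - 1 := by nlinarith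
    nlinarith [mul_nonneg e1 e2]
  have hs2 : s ^ 2 = (A ^ 2 - (2 * (d : ℂ) + 1) ^ 2) * (A ^ 2 - 1) := by
    rw [hsdef, mul_pow, Complex.I_sq, ← Complex.ofReal_pow, Real.sq_sqrt hΔ0, hΔdef, hA]
    push_cast; ring
  have hconj : (starRingEnd ℂ) a * a = A ^ 2 := by
    rw [mul_comm, Complex.mul_conj, Complex.normSq_eq_norm_sq, hA]
    push_cast; ring
  have hT : ((2 * (d : ℝ) + 1 + ‖a‖ ^ 2 : ℝ) : ℂ) = 2 * (d : ℂ) + 1 + A ^ 2 := by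
    rw [hA]; push_cast; ring
  have huu : ((‖a‖ ^ 2 : ℝ) : ℂ) = A ^ 2 := by rw [hA]; push_cast; ring
  have hA0 : A ≠ 0 := by
    rw [hA, ne_eq, Complex.ofReal_eq_zero]
    exact ne_of_gt hr0
  have hd1 : ((d : ℂ) + 1) ≠ 0 := by
    have h' : ((d : ℝ) + 1) ≠ 0 := by positivity
    exact_mod_cast h'
  have hD : (2 * ((d : ℂ) + 1) * A ^ 2) ≠ 0 :=
    mul_ne_zero (mul_ne_zero two_ne_zero hd1) (pow_ne_zero 2 hA0)
  have hD2 : (2 * ((d : ℂ) + 1) * A ^ 2) ^ 2 ≠ 0 := pow_ne_zero 2 hD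
  rw [hT, huu] at hcpdef hcmdef
  have hcpD : cp * (2 * ((d : ℂ) + 1) * A ^ 2) = a * ((2 * (d : ℂ) + 1 + A ^ 2) + s) := by
    rw [hcpdef, div_mul_cancel₀ _ hD]
  have hcmD : cm * (2 * ((d : ℂ) + 1) * A ^ 2) = a * ((2 * (d : ℂ) + 1 + A ^ 2) - s) := by
    rw [hcmdef, div_mul_cancel₀ _ hD]
  have hcs : (starRingEnd ℂ) s = -s := by
    rw [hsdef]; simp [Complex.conj_ofReal]
  have hcA : (starRingEnd ℂ) A = A := by rw [hA]; exact Complex.conj_ofReal _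
  -- conjugated versions
  have hcpDc : (starRingEnd ℂ) cp * (2 * ((d : ℂ) + 1) * A ^ 2)
      = (starRingEnd ℂ) a * ((2 * (d : ℂ) + 1 + A ^ 2) - s) := by
    have h := congrArg (starRingEnd ℂ) hcpD
    simpa [map_mul, map_add, map_pow, map_ofNat, hcs, hcA, Complex.conj_natCast,
      sub_eq_add_neg] using h
  have hcmDc : (starRingEnd ℂ) cm * (2 * ((d : ℂ) + 1) * A ^ 2)
      = (starRingEnd ℂ) a * ((2 * (d : ℂ) + 1 + A ^ 2) + s) := by
    have h := congrArg (starRingEnd ℂ) hcmD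
    simpa [map_mul, map_add, map_sub, map_pow, map_ofNat, hcs, hcA, Complex.conj_natCast,
      sub_eq_add_neg] using h
  have habs : ∀ c : ℂ, c * (starRingEnd ℂ) c = 1 → ‖c‖ = 1 := by
    intro c hc
    have h' : ((Complex.normSq c : ℝ) : ℂ) = 1 := by rw [← Complex.mul_conj]; exact hc
    have hn : Complex.normSq c = 1 := by exact_mod_cast h'
    rw [Complex.norm_def, hn, Real.sqrt_one]
  refine ⟨?_, ?_, ?_, ?_, ?_⟩
  · rw [hT]
    have key : (starRingEnd ℂ a * ((d : ℂ) + 1) * cp ^ 2 - (2 * (d : ℂ) + 1 + A ^ 2) * cp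
        + a * ((d : ℂ) + 1)) * (2 * ((d : ℂ) + 1) * A ^ 2) ^ 2 = 0 := by
      linear_combination (starRingEnd ℂ a * ((d : ℂ) + 1) * (cp * (2 * ((d : ℂ) + 1) * A ^ 2)
          + a * ((2 * (d : ℂ) + 1 + A ^ 2) + s))
          - (2 * (d : ℂ) + 1 + A ^ 2) * (2 * ((d : ℂ) + 1) * A ^ 2)) * hcpD
        + (a * ((d : ℂ) + 1) * ((2 * (d : ℂ) + 1 + A ^ 2) + s) ^ 2) * hconj
        + (a * ((d : ℂ) + 1) * A ^ 2) * hs2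
    exact (mul_eq_zero.mp key).resolve_right hD2
  · rw [hT]
    have key : (starRingEnd ℂ a * ((d : ℂ) + 1) * cm ^ 2 - (2 * (d : ℂ) + 1 + A ^ 2) * cm
        + a * ((d : ℂ) + 1)) * (2 * ((d : ℂ) + 1) * A ^ 2) ^ 2 = 0 := by
      linear_combination (starRingEnd ℂ a * ((d : ℂ) + 1) * (cm * (2 * ((d : ℂ) + 1) * A ^ 2)
          + a * ((2 * (d : ℂ) + 1 + A ^ 2) - s))
          - (2 * (d : ℂ) + 1 + A ^ 2) * (2 * ((d : ℂ) + 1) * A ^ 2)) * hcmD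
        + (a * ((d : ℂ) + 1) * ((2 * (d : ℂ) + 1 + A ^ 2) - s) ^ 2) * hconj
        + (a * ((d : ℂ) + 1) * A ^ 2) * hs2
    exact (mul_eq_zero.mp key).resolve_right hD2
  · apply habs
    have key : (cp * (starRingEnd ℂ) cp - 1) * (2 * ((d : ℂ) + 1) * A ^ 2) ^ 2 = 0 := by
      linear_combination ((starRingEnd ℂ) cp * (2 * ((d : ℂ) + 1) * A ^ 2)) * hcpD
        + (a * ((2 * (d : ℂ) + 1 + A ^ 2) + s)) * hcpDc
        + (((2 * (d : ℂ) + 1 + A ^ 2) + s) * ((2 * (d : ℂ) + 1 + A ^ 2) - s)) * hconj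
        - (A ^ 2) * hs2
    exact sub_eq_zero.mp ((mul_eq_zero.mp key).resolve_right hD2)
  · apply habs
    have key : (cm * (starRingEnd ℂ) cm - 1) * (2 * ((d : ℂ) + 1) * A ^ 2) ^ 2 = 0 := by
      linear_combination ((starRingEnd ℂ) cm * (2 * ((d : ℂ) + 1) * A ^ 2)) * hcmD
        + (a * ((2 * (d : ℂ) + 1 + A ^ 2) - s)) * hcmDc
        + (((2 * (d : ℂ) + 1 + A ^ 2) - s) * ((2 * (d : ℂ) + 1 + A ^ 2) + s)) * hconj
        - (A ^ 2) * hs2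
    exact sub_eq_zero.mp ((mul_eq_zero.mp key).resolve_right hD2)
  · constructor
    · intro he
      have h := hcpD
      rw [he, hcmD] at h
      have h2s : a * (2 * s) = 0 := by linear_combination -h
      have hs0 : s = 0 := by
        rcases mul_eq_zero.mp h2s with h' | h'
        · exact absurd h' ha
        · rcases mul_eq_zero.mp h' with h'' | h''
          · norm_num at h''
          · exact h''
      have hsq : Real.sqrt (-Δ) = 0 := by
        rw [hsdef, mul_eq_zero] at hs0
        rcases hs0 with h' | h'
        · exact absurd h' Complex.I_ne_zero
        · exact_mod_cast h'
      have hΔz : Δ = 0 := by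
        have := (Real.sqrt_eq_zero hΔ0).mp hsq
        linarith
      rw [hΔdef] at hΔz
      rcases mul_eq_zero.mp hΔz with h' | h'
      · right
        have hsq' : ‖a‖ ^ 2 = (2 * (d:ℝ) + 1) ^ 2 := by linarith
        have hp : (0:ℝ) < 2 * (d:ℝ) + 1 := by positivity
        nlinarith
      · left
        have hsq' : ‖a‖ ^ 2 = 1 := by linarith
        nlinarith
    · intro hor
      have hΔz : Δ = 0 := by
        rw [hΔdef]
        rcases hor with h' | h'
        · rw [h']; ring
        · rw [h']; ring
      have hs0 : s = 0 := by rw [hsdef, hΔz]; simp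
      rw [hcpdef, hcmdef, hs0, add_zero, sub_zero]
end

section
/- Let d ≥ 1 and a ∈ ℂ with |a| > 2d+1. Let c± be the two roots of h(z) = ā(d+1)z² − (2d+1+|a|²)z + a(d+1). Then c₊ · conj(c₋) = 1 (the roots are symmetric with respect to the unit circle), and (with |c₊| ≥ |c₋|) one has 1 < |c₊| < |a| and 1/|a| < |c₋| < 1. -/
set_option maxHeartbeats 1000000 in
/-- For `|a| > 2d+1`, the two roots `c±` of `h` are symmetric with respect to
the unit circle and satisfy `1 < |c₊| < |a|` and `1/|a| < |c₋| < 1`. -/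
theorem stmt7 (d : ℕ) (hd : 1 ≤ d) (a : ℂ) (ha : 2 * d + 1 < ‖a‖)
    (cp cm : ℂ)
    (hp : starRingEnd ℂ a * ((d : ℂ) + 1) * cp ^ 2
        - ((2 * (d : ℝ) + 1 + ‖a‖ ^ 2 : ℝ) : ℂ) * cp + a * ((d : ℂ) + 1) = 0)
    (hm : starRingEnd ℂ a * ((d : ℂ) + 1) * cm ^ 2
        - ((2 * (d : ℝ) + 1 + ‖a‖ ^ 2 : ℝ) : ℂ) * cm + a * ((d : ℂ) + 1) = 0)
    (hne : cp ≠ cm)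
    (hord : ‖cm‖ ≤ ‖cp‖) :
    cp * starRingEnd ℂ cm = 1 ∧
    1 < ‖cp‖ ∧ ‖cp‖ < ‖a‖ ∧
    1 / ‖a‖ < ‖cm‖ ∧ ‖cm‖ < 1 := by
  have hd1 : (1:ℝ) ≤ (d:ℝ) := by exact_mod_cast hd
  set r : ℝ := ‖a‖ with hrdef
  have hr3 : 3 < r := by
    have : (3:ℝ) ≤ 2*(d:ℝ)+1 := by linarith
    linarith [ha]
  have ha0 : a ≠ 0 := by
    intro h
    rw [h] at hrdef
    simp at hrdef
    linarith
  set A : ℂ := starRingEnd ℂ a * ((d : ℂ) + 1) with hA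
  set B : ℂ := ((2 * (d : ℝ) + 1 + r ^ 2 : ℝ) : ℂ) with hB
  set C : ℂ := a * ((d : ℂ) + 1) with hC
  have hdc : ((d:ℂ)+1) ≠ 0 := by
    have : ((d:ℂ)+1) = ((d+1 : ℕ) : ℂ) := by push_cast; ring
    rw [this]
    exact_mod_cast Nat.succ_ne_zero d
  have hAne : A ≠ 0 := mul_ne_zero (by simpa using ha0) hdc
  have hCne : C ≠ 0 := mul_ne_zero ha0 hdc
  -- Vieta
  have hsub : (cp - cm) * (A*(cp+cm) - B) = 0 := by linear_combination hp - hm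
  have hsum : A*(cp+cm) = B := by
    rcases mul_eq_zero.mp hsub with h | h
    · exact absurd (sub_eq_zero.mp h) hne
    · exact sub_eq_zero.mp h
  have hprod : A*(cp*cm) = C := by linear_combination cp * hsum - hp
  -- moduli helpers
  have habsA : ‖A‖ = r * ((d:ℝ)+1) := by
    rw [hA, norm_mul, Complex.norm_conj]
    congr 1
    have : ((d:ℂ)+1) = ((d+1 : ℕ) : ℂ) := by push_cast; ring
    rw [this, Complex.norm_natCast]
    push_cast; ring
  have habsC : ‖C‖ = r * ((d:ℝ)+1) := by
    rw [hC, norm_mul]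
    congr 1
    have : ((d:ℂ)+1) = ((d+1 : ℕ) : ℂ) := by push_cast; ring
    rw [this, Complex.norm_natCast]
    push_cast; ring
  have hcp0 : cp ≠ 0 := by
    intro h
    rw [h] at hprod
    simp at hprod
    exact hCne hprod.symm
  -- product of moduli = 1
  have hpq : ‖cp‖ * ‖cm‖ = 1 := by
    have h2 := congrArg (‖·‖) hprod
    rw [norm_mul, habsA, habsC] at h2
    have hApos : (0:ℝ) < r * ((d:ℝ)+1) := by positivity
    have h3 : ‖(cp * cm)‖ = 1 := by
      have := mul_left_cancel₀ (ne_of_gt hApos) (h2.trans (mul_one _).symm)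
      exact this
    rw [norm_mul] at h3
    exact h3
  -- conjugate root
  have hz0 : A - B * starRingEnd ℂ cp + C * (starRingEnd ℂ cp)^2 = 0 := by
    have h := congrArg (starRingEnd ℂ) hp
    simp only [hA, hB, hC, map_sub, map_add, map_mul, map_pow, map_zero,
      Complex.conj_conj, Complex.conj_ofReal, map_one, map_natCast] at h
    linear_combination h
  have hccp : starRingEnd ℂ cp ≠ 0 := by simpa using hcp0
  set z : ℂ := (starRingEnd ℂ cp)⁻¹ with hzdef
  have hzc : z * starRingEnd ℂ cp = 1 := inv_mul_cancel₀ hccp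
  have hzroot : A * z^2 - B*z + C = 0 := by
    linear_combination z^2 * hz0 + (B*z - C*(z*(starRingEnd ℂ cp) + 1)) * hzc
  have hfac : A*(z - cp)*(z - cm) = 0 := by
    linear_combination hzroot - z * hsum + hprod
  have hzcases : z = cp ∨ z = cm := by
    rcases mul_eq_zero.mp hfac with h | h
    · rcases mul_eq_zero.mp h with h | h
      · exact absurd h hAne
      · exact Or.inl (sub_eq_zero.mp h)
    · exact Or.inr (sub_eq_zero.mp h)
  have hkey : cp * starRingEnd ℂ cm = 1 := by
    rcases hzcases with h | h
    · -- |cp| = 1, contradiction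
      exfalso
      have h1 : cp * starRingEnd ℂ cp = 1 := by
        rw [h] at hzc; linear_combination hzc
      have habs1 : ‖cp‖ = 1 := by
        have := congrArg (‖·‖) h1
        rw [norm_mul, Complex.norm_conj, norm_one] at this
        nlinarith [norm_nonneg cp]
      have habs2 : ‖cm‖ = 1 := by
        rw [habs1, one_mul] at hpq; exact hpq
      have hsabs := congrArg (‖·‖) hsum
      rw [norm_mul, habsA, hB] at hsabs
      have hBabs : ‖((2 * (d : ℝ) + 1 + r ^ 2 : ℝ) : ℂ)‖
          = 2*(d:ℝ)+1+r^2 := by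
        rw [Complex.norm_real, Real.norm_eq_abs, abs_of_pos]; positivity
      rw [hBabs] at hsabs
      have htri : ‖(cp + cm)‖ ≤ 2 := by
        calc ‖(cp+cm)‖ ≤ ‖cp‖ + ‖cm‖ :=
          norm_add_le _ _
        _ = 2 := by rw [habs1, habs2]; norm_num
      have e1 : (0:ℝ) < (r-1)*(r-(2*(d:ℝ)+1)) :=
        mul_pos (by linarith) (by linarith)
      have e2 : r*((d:ℝ)+1)*‖(cp+cm)‖ ≤ r*((d:ℝ)+1)*2 :=
        mul_le_mul_of_nonneg_left htri (by positivity)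
      nlinarith [e1, e2, hsabs]
    · -- z = cm
      have h1 : cm * starRingEnd ℂ cp = 1 := by rw [← h]; exact hzc
      have := congrArg (starRingEnd ℂ) h1
      simp only [map_mul, Complex.conj_conj, map_one] at this
      linear_combination this
  -- moduli
  have hqpos : 0 < ‖cm‖ := by
    rcases lt_or_eq_of_le (norm_nonneg cm) with h | h
    · exact h
    · exfalso; rw [← h] at hpq; simp at hpq
  have hppos : 0 < ‖cp‖ := lt_of_lt_of_le hqpos hord
  have hp1 : 1 < ‖cp‖ := by
    have hge : 1 ≤ ‖cp‖ := by nlinarith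
    rcases lt_or_eq_of_le hge with h | h
    · exact h
    · exfalso
      have hq1 : ‖cm‖ = 1 := by nlinarith
      have hcm1 : cm * starRingEnd ℂ cm = 1 := by
        rw [Complex.mul_conj]
        have : Complex.normSq cm = 1 := by
          rw [← Complex.sq_norm, hq1]; norm_num
        rw [this]; norm_num
      have hcmne : starRingEnd ℂ cm ≠ 0 := by
        simp only [ne_eq, map_eq_zero]
        intro hz; rw [hz] at hqpos; simp at hqpos
      exact hne (mul_right_cancel₀ hcmne (hkey.trans hcm1.symm))
  -- discriminant
  set Δ : ℝ := (2*(d:ℝ)+1+r^2)^2 - 4*(r^2*((d:ℝ)+1)^2) with hΔ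
  have hΔpos : 0 < Δ := by
    have e1 : (0:ℝ) < (r-1)*(r-(2*(d:ℝ)+1)) := mul_pos (by linarith) (by linarith)
    have e2 : (0:ℝ) < (r+1)*(r+(2*(d:ℝ)+1)) := mul_pos (by linarith) (by linarith)
    nlinarith [mul_pos e1 e2]
  have hAC : A*C = ((r^2 * ((d:ℝ)+1)^2 : ℝ) : ℂ) := by
    have h5 : (starRingEnd ℂ) a * a = (r:ℂ)^2 := by
      rw [mul_comm, Complex.mul_conj, ← Complex.sq_norm, ← hrdef]
      norm_cast
    rw [hA, hC]
    push_cast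
    linear_combination ((d:ℂ)+1)^2 * h5
  have hdiff2 : A^2*(cp-cm)^2 = ((Δ:ℝ):ℂ) := by
    have hdiff : A^2*(cp-cm)^2 = B^2 - 4*(A*C) := by
      linear_combination (A*(cp+cm)+B) * hsum - 4*A*hprod
    rw [hdiff, hAC, hB, hΔ]
    push_cast; ring
  have hdabs : (r*((d:ℝ)+1) * ‖(cp-cm)‖)^2 = Δ := by
    have h4 := congrArg (‖·‖) hdiff2
    rw [norm_mul, norm_pow, norm_pow, habsA, Complex.norm_real, Real.norm_eq_abs,
      abs_of_pos hΔpos] at h4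
    linear_combination h4
  have hsabs : r*((d:ℝ)+1) * ‖(cp+cm)‖ = 2*(d:ℝ)+1+r^2 := by
    have h6 := congrArg (‖·‖) hsum
    rw [norm_mul, habsA, hB, Complex.norm_real, Real.norm_eq_abs, abs_of_pos (by positivity)] at h6
    exact h6
  have hsqrt : Real.sqrt Δ = r*((d:ℝ)+1) * ‖(cp-cm)‖ := by
    rw [← hdabs, Real.sqrt_sq (by positivity)]
  have hsqlt : Real.sqrt Δ < (2*(d:ℝ)+1)*(r^2-1) := by
    have hpos2 : (0:ℝ) < (2*(d:ℝ)+1)*(r^2-1) := by nlinarith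
    rw [Real.sqrt_lt' hpos2]
    nlinarith [mul_pos (show (0:ℝ) < ((2*(d:ℝ)+1)^2-1)*r^2 by nlinarith)
      (show (0:ℝ) < r^2-1 by nlinarith)]
  have htri2 : 2*‖cp‖ ≤ ‖(cp+cm)‖ + ‖(cp-cm)‖ := by
    have e : (2:ℂ)*cp = (cp+cm)+(cp-cm) := by ring
    calc 2*‖cp‖ = ‖((cp+cm)+(cp-cm))‖ := by
          rw [← e, norm_mul]; norm_num
    _ ≤ ‖(cp+cm)‖ + ‖(cp-cm)‖ := norm_add_le _ _
  have hplt : ‖cp‖ < r := by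
    have hK : (0:ℝ) < r*((d:ℝ)+1) := by positivity
    have h7 : r*((d:ℝ)+1)*(2*‖cp‖)
        ≤ (2*(d:ℝ)+1+r^2) + Real.sqrt Δ := by
      rw [hsqrt, ← hsabs]
      nlinarith [mul_le_mul_of_nonneg_left htri2 (le_of_lt hK)]
    have h8 : (2*(d:ℝ)+1+r^2) + Real.sqrt Δ < 2*(r*((d:ℝ)+1))*r := by
      nlinarith [hsqlt]
    nlinarith [h7, h8, hK]
  refine ⟨hkey, hp1, hplt, ?_, ?_⟩
  · rw [div_lt_iff₀ (by linarith : (0:ℝ) < r)]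
    nlinarith [mul_lt_mul_of_pos_left hplt hqpos]
  · nlinarith
end

section
/- Let d ≥ 1 and a ∈ ℂ with 0 < |a| < 1. Let c± be the two roots of h(z) = ā(d+1)z² − (2d+1+|a|²)z + a(d+1), with |c₋| ≤ |c₊|. Then c₊·conj(c₋) = 1, |c₋| < |a| < 1, and |c₊| > 1/|a| > 1. -/
/-- For `0 < |a| < 1`, the two roots `c±` of `h` satisfy `c₊·conj c₋ = 1`,
`|c₋| < |a| < 1` and `|c₊| > 1/|a| > 1`. -/
theorem stmt8 (d : ℕ) (hd : 1 ≤ d) (a : ℂ) (ha0 : 0 < ‖a‖)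
    (ha1 : ‖a‖ < 1)
    (cp cm : ℂ)
    (hp : starRingEnd ℂ a * ((d : ℂ) + 1) * cp ^ 2
        - ((2 * (d : ℝ) + 1 + ‖a‖ ^ 2 : ℝ) : ℂ) * cp + a * ((d : ℂ) + 1) = 0)
    (hm : starRingEnd ℂ a * ((d : ℂ) + 1) * cm ^ 2
        - ((2 * (d : ℝ) + 1 + ‖a‖ ^ 2 : ℝ) : ℂ) * cm + a * ((d : ℂ) + 1) = 0)
    (hne : cp ≠ cm)
    (hord : ‖cm‖ ≤ ‖cp‖) :
    cp * starRingEnd ℂ cm = 1 ∧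
    ‖cm‖ < ‖a‖ ∧ ‖a‖ < 1 ∧
    1 / ‖a‖ < ‖cp‖ ∧ 1 < 1 / ‖a‖ := by
  have ha : a ≠ 0 := by
    intro h; rw [h] at ha0; simp at ha0
  set r : ℝ := ‖a‖ with hrdef
  have hca : starRingEnd ℂ a ≠ 0 := by simpa using ha
  have hd1 : ((d : ℂ) + 1) ≠ 0 := by
    have h : ((d : ℂ) + 1) = ((d + 1 : ℕ) : ℂ) := by push_cast; ring
    rw [h]
    exact_mod_cast Nat.succ_ne_zero d
  have hdR : (1 : ℝ) ≤ (d : ℝ) := by exact_mod_cast hd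
  -- Vieta: sum
  have hkey : (cp - cm) * (starRingEnd ℂ a * ((d : ℂ) + 1) * (cp + cm)
      - ((2 * (d : ℝ) + 1 + r ^ 2 : ℝ) : ℂ)) = 0 := by
    linear_combination hp - hm
  have hsum : starRingEnd ℂ a * ((d : ℂ) + 1) * (cp + cm)
      = ((2 * (d : ℝ) + 1 + r ^ 2 : ℝ) : ℂ) := by
    rcases mul_eq_zero.mp hkey with h | h
    · exact absurd (sub_eq_zero.mp h) hne
    · exact sub_eq_zero.mp h
  -- Vieta: product
  have hprod : starRingEnd ℂ a * (cp * cm) = a := by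
    have h2 : ((d : ℂ) + 1) * (starRingEnd ℂ a * (cp * cm) - a) = 0 := by
      linear_combination cp * hsum - hp
    rcases mul_eq_zero.mp h2 with h | h
    · exact absurd h hd1
    · exact sub_eq_zero.mp h
  have hcm0 : cm ≠ 0 := by
    intro h; rw [h] at hprod; simp at hprod; exact ha hprod.symm
  have hcp0 : cp ≠ 0 := by
    intro h; rw [h] at hprod; simp at hprod; exact ha hprod.symm
  -- the unit-circle case is impossible
  have hcirc : ¬ (‖cp‖ = 1 ∧ ‖cm‖ = 1) := by
    rintro ⟨h1, h2⟩
    have habs := congrArg norm hsum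
    simp only [norm_mul, Complex.norm_conj, Complex.norm_real, Real.norm_eq_abs] at habs
    have hsle : ‖cp + cm‖ ≤ 2 := by
      calc ‖cp + cm‖ ≤ ‖cp‖ + ‖cm‖ :=
            norm_add_le _ _
        _ = 2 := by rw [h1, h2]; norm_num
    have hd1abs : ‖(d : ℂ) + 1‖ = (d : ℝ) + 1 := by
      have h : ((d : ℂ) + 1) = (((d : ℝ) + 1 : ℝ) : ℂ) := by push_cast; ring
      rw [h, Complex.norm_real, Real.norm_eq_abs]
      exact abs_of_pos (by positivity)
    rw [hd1abs] at habs
    have hS : |2 * (d : ℝ) + 1 + r ^ 2| = 2 * (d : ℝ) + 1 + r ^ 2 := by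
      rw [abs_of_pos]; positivity
    rw [hS] at habs
    nlinarith [mul_pos (sub_pos.mpr ha1) (show (0:ℝ) < 2 * (d : ℝ) + 1 - r by nlinarith),
      mul_le_mul_of_nonneg_left hsle (show (0:ℝ) ≤ r * ((d : ℝ) + 1) by positivity)]
  -- conjugates of the equations
  have hmc : a * ((d : ℂ) + 1) * (starRingEnd ℂ cm) ^ 2
      - ((2 * (d : ℝ) + 1 + r ^ 2 : ℝ) : ℂ) * starRingEnd ℂ cm
      + starRingEnd ℂ a * ((d : ℂ) + 1) = 0 := by
    have h := congrArg (starRingEnd ℂ) hm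
    simp only [map_sub, map_add, map_mul, map_pow, map_zero, Complex.conj_conj,
      Complex.conj_ofReal, map_natCast, map_one] at h
    linear_combination h
  have hpc : a * ((d : ℂ) + 1) * (starRingEnd ℂ cp) ^ 2
      - ((2 * (d : ℝ) + 1 + r ^ 2 : ℝ) : ℂ) * starRingEnd ℂ cp
      + starRingEnd ℂ a * ((d : ℂ) + 1) = 0 := by
    have h := congrArg (starRingEnd ℂ) hp
    simp only [map_sub, map_add, map_mul, map_pow, map_zero, Complex.conj_conj,
      Complex.conj_ofReal, map_natCast, map_one] at h
    linear_combination h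
  -- main claim: cp * conj cm = 1
  have hP : cp * starRingEnd ℂ cm = 1 := by
    have hw : starRingEnd ℂ a * ((d : ℂ) + 1) *
        ((1 - cp * starRingEnd ℂ cm) * (1 - cm * starRingEnd ℂ cm)) = 0 := by
      linear_combination hmc - (starRingEnd ℂ cm) * hsum
        + ((d : ℂ) + 1) * (starRingEnd ℂ cm) ^ 2 * hprod
    have hw' : (1 - cp * starRingEnd ℂ cm) * (1 - cm * starRingEnd ℂ cm) = 0 := by
      rcases mul_eq_zero.mp hw with h | h
      · exact absurd h (mul_ne_zero hca hd1)
      · exact h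
    rcases mul_eq_zero.mp hw' with h | h
    · linear_combination -h
    · -- cm * conj cm = 1, so |cm| = 1; now look at cp
      have hcm1 : ‖cm‖ = 1 := by
        have h0 : cm * starRingEnd ℂ cm = 1 := by linear_combination -h
        have h2 := congrArg norm h0
        simp only [norm_mul, Complex.norm_conj, norm_one] at h2
        nlinarith [norm_nonneg cm]
      have hw2 : starRingEnd ℂ a * ((d : ℂ) + 1) *
          ((1 - cp * starRingEnd ℂ cp) * (1 - cm * starRingEnd ℂ cp)) = 0 := by
        linear_combination hpc - (starRingEnd ℂ cp) * hsum
          + ((d : ℂ) + 1) * (starRingEnd ℂ cp) ^ 2 * hprod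
      have hw2' : (1 - cp * starRingEnd ℂ cp) * (1 - cm * starRingEnd ℂ cp) = 0 := by
        rcases mul_eq_zero.mp hw2 with h' | h'
        · exact absurd h' (mul_ne_zero hca hd1)
        · exact h'
      rcases mul_eq_zero.mp hw2' with h' | h'
      · exfalso
        have hcp1 : ‖cp‖ = 1 := by
          have h0 : cp * starRingEnd ℂ cp = 1 := by linear_combination -h'
          have h2 := congrArg norm h0
          simp only [norm_mul, Complex.norm_conj, norm_one] at h2
          nlinarith [norm_nonneg cp]
        exact hcirc ⟨hcp1, hcm1⟩
      · -- cm * conj cp = 1; take conjugates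
        have h2 : cm * starRingEnd ℂ cp = 1 := by linear_combination -h'
        have h3 := congrArg (starRingEnd ℂ) h2
        simp only [map_mul, Complex.conj_conj, map_one] at h3
        linear_combination h3
  -- μ = conj a * cm is real
  have hreal' : starRingEnd ℂ (starRingEnd ℂ a * cm) = starRingEnd ℂ a * cm := by
    have h1 : starRingEnd ℂ a * cm = a * starRingEnd ℂ cm := by
      linear_combination (starRingEnd ℂ cm) * hprod - (starRingEnd ℂ a * cm) * hP
    rw [map_mul, Complex.conj_conj]
    linear_combination -h1
  set μ : ℝ := (starRingEnd ℂ a * cm).re with hmudef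
  have hmuC : (μ : ℂ) = starRingEnd ℂ a * cm := Complex.conj_eq_iff_re.mp hreal'
  have haa' : a * starRingEnd ℂ a = (r : ℂ) ^ 2 := by
    rw [Complex.mul_conj, Complex.normSq_eq_norm_sq]
    push_cast
    ring
  -- real quadratic satisfied by μ
  have hm' : starRingEnd ℂ a * ((d : ℂ) + 1) * cm ^ 2
      - (2 * (d : ℂ) + 1 + (r : ℂ) ^ 2) * cm + a * ((d : ℂ) + 1) = 0 := by
    have h := hm
    push_cast at h
    linear_combination h
  have hq : ((d : ℝ) + 1) * μ ^ 2 - (2 * (d : ℝ) + 1 + r ^ 2) * μ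
      + ((d : ℝ) + 1) * r ^ 2 = 0 := by
    have hC : ((d : ℂ) + 1) * (μ : ℂ) ^ 2 - (2 * (d : ℂ) + 1 + (r : ℂ) ^ 2) * (μ : ℂ)
        + ((d : ℂ) + 1) * (r : ℂ) ^ 2 = 0 := by
      rw [hmuC]
      linear_combination (starRingEnd ℂ a) * hm' - ((d : ℂ) + 1) * haa'
    exact_mod_cast hC
  -- endgame over the reals
  have habsm : |μ| = r * ‖cm‖ := by
    rw [← Real.norm_eq_abs, ← Complex.norm_real, hmuC, norm_mul, Complex.norm_conj]
  have hcmpos : 0 < ‖cm‖ := norm_pos_iff.mpr hcm0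
  have hμpos : 0 < μ := by
    by_contra hcon
    push_neg at hcon
    nlinarith [sq_nonneg μ, mul_pos (mul_pos ha0 ha0) (show (0:ℝ) < (d:ℝ) + 1 by linarith),
      mul_nonneg (show (0:ℝ) ≤ 2 * (d:ℝ) + 1 + r ^ 2 by positivity) (neg_nonneg.mpr hcon)]
  have hPabs : ‖cp‖ * ‖cm‖ = 1 := by
    have h := congrArg norm hP
    simpa [norm_mul, Complex.norm_conj] using h
  have hcmle1 : ‖cm‖ ≤ 1 := by
    nlinarith [hord, hPabs, hcmpos, sq_nonneg (‖cm‖ - 1)]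
  have hμler : μ ≤ r := by
    have h1 : μ ≤ |μ| := le_abs_self μ
    have h2 : r * ‖cm‖ ≤ r * 1 := mul_le_mul_of_nonneg_left hcmle1 ha0.le
    linarith [habsm.le, habsm.ge]
  have hμlt : μ < r ^ 2 := by
    by_contra hcon
    push_neg at hcon
    -- identity: (d+1)μ² - (2d+1+r²)μ + (d+1)r²
    --   = d·μ(μ-r) + d·(μ-r²)(r-2) + d·r²(r-1) + (μ-1)(μ-r²)
    have hμ1 : μ < 1 := lt_of_le_of_lt hμler ha1
    nlinarith [mul_nonneg (show (0:ℝ) ≤ (d:ℝ) by linarith)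
        (mul_nonneg hμpos.le (sub_nonneg.mpr hμler)),
      mul_nonneg (show (0:ℝ) ≤ (d:ℝ) by linarith)
        (mul_nonneg (sub_nonneg.mpr hcon) (show (0:ℝ) ≤ 2 - r by linarith)),
      mul_pos (show (0:ℝ) < (d:ℝ) by linarith)
        (mul_pos (mul_pos ha0 ha0) (show (0:ℝ) < 1 - r by linarith)),
      mul_nonneg (show (0:ℝ) ≤ 1 - μ by linarith) (sub_nonneg.mpr hcon)]
  have hcm_lt : ‖cm‖ < r := by
    have h1 : r * ‖cm‖ = μ := by
      rw [← habsm]; exact abs_of_pos hμpos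
    by_contra hcon
    push_neg at hcon
    have h2 : r * r ≤ r * ‖cm‖ := mul_le_mul_of_nonneg_left hcon ha0.le
    have h3 : r * r = r ^ 2 := (sq r).symm
    linarith
  have hcp_gt : 1 / r < ‖cp‖ := by
    rw [div_lt_iff₀ ha0]
    have h2 := mul_lt_mul_of_pos_left hcm_lt (norm_pos_iff.mpr hcp0)
    linarith
  have h1r : (1 : ℝ) < 1 / r := by
    rw [lt_div_iff₀ ha0]; linarith
  exact ⟨hP, hcm_lt, ha1, hcp_gt, h1r⟩
end

section
/- Let D ⊂ ℂ be a domain, K ⊂ D compact, and φ: D → D holomorphic such that the family of iterates {φⁿ} has only constant limit functions on D (equivalently, φ is a strict contraction of the Poincaré metric with uniform contraction factor on K ∪ φ(K)). Then there exist C > 0 and λ ∈ (0,1) with diam(φᵏ(K)) ≤ C·λᵏ for all k; in particular diam(φᵏ(K)) → 0 and the series Σ_k diam(φᵏ(K)) converges. -/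
open Complex Metric Set Bornology

section Stmt16Aux

lemma normSq_mob_identity (a z : ℂ) :
    Complex.normSq (1 - (starRingEnd ℂ) a * z) - Complex.normSq (z - a)
      = (1 - Complex.normSq a) * (1 - Complex.normSq z) := by
  simp [Complex.normSq_apply, Complex.mul_re, Complex.mul_im, Complex.sub_re, Complex.sub_im,
    Complex.one_re, Complex.one_im, Complex.conj_re, Complex.conj_im]
  ring

lemma mob_norm_lt_one {a z : ℂ} (ha : ‖a‖ < 1) (hz : ‖z‖ < 1) :
    ‖(z - a) / (1 - (starRingEnd ℂ) a * z)‖ < 1 := by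
  have h1 : Complex.normSq a < 1 := by
    simpa [Complex.normSq_eq_norm_sq] using
      (by nlinarith [norm_nonneg a] : ‖a‖ ^ 2 < 1)
  have h2 : Complex.normSq z < 1 := by
    simpa [Complex.normSq_eq_norm_sq] using
      (by nlinarith [norm_nonneg z] : ‖z‖ ^ 2 < 1)
  have key := normSq_mob_identity a z
  have hpos : 0 < (1 - Complex.normSq a) * (1 - Complex.normSq z) := by nlinarith
  have hlt : Complex.normSq (z - a) < Complex.normSq (1 - (starRingEnd ℂ) a * z) := by
    nlinarith [Complex.normSq_nonneg (z - a)]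
  have hd : Complex.normSq (1 - (starRingEnd ℂ) a * z) > 0 := by
    nlinarith [Complex.normSq_nonneg (z - a)]
  rw [norm_div, div_lt_one]
  · have := Complex.normSq_eq_norm_sq (z - a)
    have h3 : ‖z - a‖ ^ 2 < ‖1 - (starRingEnd ℂ) a * z‖ ^ 2 := by
      simpa [← Complex.sq_norm] using hlt
    nlinarith [norm_nonneg (z - a), norm_nonneg (1 - (starRingEnd ℂ) a * z)]
  · have : ‖1 - (starRingEnd ℂ) a * z‖ ^ 2 > 0 := by
      simpa [← Complex.sq_norm] using hd
    nlinarith [norm_nonneg (1 - (starRingEnd ℂ) a * z)]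

lemma norm_mob_identity (a z : ℂ) :
    ‖(1 : ℂ) - (starRingEnd ℂ) a * z‖ ^ 2 - ‖z - a‖ ^ 2
      = (1 - ‖a‖ ^ 2) * (1 - ‖z‖ ^ 2) := by
  have := normSq_mob_identity a z
  simpa [← Complex.sq_norm] using this

lemma mob_avg_mono {x₁ x₂ s t : ℝ} (hx₁ : 0 ≤ x₁) (hx₂ : x₂ ≤ 1) (hx : x₁ ≤ x₂)
    (hs : 0 ≤ s) (ht : t ≤ 1) (hst : s ≤ t) :
    (x₁ + s) / (1 + x₁ * s) ≤ (x₂ + t) / (1 + x₂ * t) := by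
  have h1 : (0:ℝ) < 1 + x₁ * s := by nlinarith
  have h2 : (0:ℝ) < 1 + x₂ * t := by nlinarith
  rw [div_le_div_iff₀ h1 h2]
  nlinarith [mul_nonneg (sub_nonneg.2 hx) (sub_nonneg.2 (by nlinarith : s * t ≤ (1:ℝ))),
    mul_nonneg (sub_nonneg.2 hst) (sub_nonneg.2 (by nlinarith : x₁ * x₂ ≤ (1:ℝ)))]

lemma prop_bound {A B : ℂ} (hA : ‖A‖ < 1) (hB : ‖B‖ < 1) {t : ℝ} (ht1 : t ≤ 1)
    (ht : ‖(B - A) / (1 - (starRingEnd ℂ) A * B)‖ ≤ t) :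
    ‖B‖ ≤ (‖A‖ + t) / (1 + ‖A‖ * t) := by
  set w : ℂ := (B - A) / (1 - (starRingEnd ℂ) A * B) with hw
  have hAB : ‖(starRingEnd ℂ) A * B‖ < 1 := by
    rw [norm_mul, Complex.norm_conj]
    nlinarith [norm_nonneg A, norm_nonneg B]
  have hden : (1 : ℂ) - (starRingEnd ℂ) A * B ≠ 0 := by
    intro h
    rw [sub_eq_zero] at h
    have h2 := congrArg (fun z : ℂ => ‖z‖) h
    simp only [norm_one] at h2
    rw [← h2] at hAB
    exact lt_irrefl _ hAB
  have hwlt : ‖w‖ < 1 := mob_norm_lt_one hA hB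
  have hkey : B * (1 + (starRingEnd ℂ) A * w) = w + A := by
    have hdiv : (B - A) / (1 - (starRingEnd ℂ) A * B) = (B - A) * (1 - (starRingEnd ℂ) A * B)⁻¹ :=
      div_eq_mul_inv _ _
    rw [hw, hdiv]
    have hinv := mul_inv_cancel₀ hden
    linear_combination (A - B) * hinv
  -- identity with a := -A, z := w
  have hid : ‖(1 : ℂ) + (starRingEnd ℂ) A * w‖ ^ 2 - ‖w + A‖ ^ 2
      = (1 - ‖A‖ ^ 2) * (1 - ‖w‖ ^ 2) := by
    have := norm_mob_identity (-A) w
    simpa [sub_neg_eq_add, norm_neg] using this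
  set x := ‖A‖; set y := ‖w‖; set d := ‖(1 : ℂ) + (starRingEnd ℂ) A * w‖
  have hx0 : 0 ≤ x := norm_nonneg _
  have hy0 : 0 ≤ y := norm_nonneg _
  have hd0 : 0 ≤ d := norm_nonneg _
  have hdle : d ≤ 1 + x * y := by
    calc d ≤ ‖(1:ℂ)‖ + ‖(starRingEnd ℂ) A * w‖ := norm_add_le _ _
    _ = 1 + x * y := by rw [norm_one, norm_mul, Complex.norm_conj]
  have hBd : ‖B‖ * d = ‖w + A‖ := by rw [← norm_mul, hkey]
  have hprodpos : 0 < (1 - x ^ 2) * (1 - y ^ 2) :=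
    mul_pos (by nlinarith) (by nlinarith)
  have hd2pos : 0 < d ^ 2 := by nlinarith [sq_nonneg ‖w + A‖]
  have hb0 : 0 ≤ ‖B‖ := norm_nonneg _
  have hm : ‖w + A‖ ^ 2 = ‖B‖ ^ 2 * d ^ 2 := by rw [← hBd]; ring
  have hsq : d ^ 2 * (1 - ‖B‖ ^ 2) = (1 - x ^ 2) * (1 - y ^ 2) := by
    linear_combination hid + hm
  have hxy : (0:ℝ) < 1 + x * y := by nlinarith
  have hdd : d ^ 2 ≤ (1 + x * y) ^ 2 := by nlinarith
  have h1b : 0 ≤ 1 - ‖B‖ ^ 2 := by nlinarith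
  have hfin2 : (‖B‖ * (1 + x * y)) ^ 2 ≤ (x + y) ^ 2 := by
    nlinarith [mul_le_mul_of_nonneg_right hdd h1b]
  have hgoal1 : ‖B‖ ≤ (x + y) / (1 + x * y) := by
    rw [le_div_iff₀ hxy]
    exact (pow_le_pow_iff_left₀ (mul_nonneg hb0 hxy.le) (add_nonneg hx0 hy0)
      two_ne_zero).mp hfin2
  calc ‖B‖ ≤ (x + y) / (1 + x * y) := hgoal1
  _ ≤ (‖A‖ + t) / (1 + ‖A‖ * t) := mob_avg_mono hx0 hA.le le_rfl hy0 ht1 ht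

lemma one_sub_ne {a z : ℂ} (ha : ‖a‖ < 1) (hz : ‖z‖ < 1) :
    (1 : ℂ) - (starRingEnd ℂ) a * z ≠ 0 := by
  intro h
  rw [sub_eq_zero] at h
  have h2 := congrArg (fun u : ℂ => ‖u‖) h
  simp only [norm_one, norm_mul, Complex.norm_conj] at h2
  nlinarith [norm_nonneg a, norm_nonneg z]

/-- Schwarz–Pick step on a Euclidean ball. -/
lemma sp_step {U : Set ℂ} {f : ℂ → ℂ} (hf : DifferentiableOn ℂ f U)
    (hfm : MapsTo f U (ball (0:ℂ) 1)) {x y : ℂ} {s : ℝ} (hs : 0 < s)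
    (hball : ball x s ⊆ U) (hy : y ∈ ball x s) :
    ‖(f y - f x) / (1 - (starRingEnd ℂ) (f x) * f y)‖ ≤ dist y x / s := by
  set A := f x with hA'
  have hmem : ∀ z ∈ ball x s, ‖f z‖ < 1 := by
    intro z hz
    simpa using hfm (hball hz)
  have hA : ‖A‖ < 1 := hmem x (mem_ball_self hs)
  set F : ℂ → ℂ := fun z => (f z - A) / (1 - (starRingEnd ℂ) A * f z) with hF
  have hFdiff : DifferentiableOn ℂ F (ball x s) := by
    apply DifferentiableOn.div
    · exact (hf.mono hball).sub_const A
    · exact (differentiableOn_const _).sub ((differentiableOn_const _).mul (hf.mono hball))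
    · intro z hz
      exact one_sub_ne hA (hmem z hz)
  have hFx : F x = 0 := by simp only [hF, hA', sub_self, zero_div]
  have hFmaps : MapsTo F (ball x s) (ball (F x) 1) := by
    intro z hz
    rw [hFx, mem_ball, dist_zero_right]
    exact mob_norm_lt_one hA (hmem z hz)
  have := Complex.dist_le_div_mul_dist_of_mapsTo_ball hFdiff (hFmaps.mono_right ball_subset_closedBall) hy
  rw [hFx, dist_zero_right] at this
  calc ‖F y‖ ≤ 1 / s * dist y x := this
  _ = dist y x / s := by ring

noncomputable def mobT : ℝ → ℝ := fun ρ => (2 * ρ + 1) / (ρ + 2)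

lemma mobT_iter_mem (n : ℕ) : 0 ≤ mobT^[n] 0 ∧ mobT^[n] 0 < 1 := by
  induction n with
  | zero => simp
  | succ n ih =>
    rw [Function.iterate_succ_apply']
    obtain ⟨h0, h1⟩ := ih
    constructor
    · apply div_nonneg <;> nlinarith
    · rw [mobT, div_lt_one (by nlinarith)]
      nlinarith

/-- propagation of smallness along a chain -/
lemma chain_bound {U : Set ℂ} {f : ℂ → ℂ} (hf : DifferentiableOn ℂ f U)
    (hfm : MapsTo f U (ball (0:ℂ) 1)) {s : ℝ} (hs : 0 < s)
    (x : ℕ → ℂ) (hpt : ∀ i, ball (x i) s ⊆ U)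
    (hstep : ∀ i, dist (x (i + 1)) (x i) ≤ s / 2)
    (hx0 : f (x 0) = 0) : ∀ n, ‖f (x n)‖ ≤ mobT^[n] 0 := by
  intro n
  induction n with
  | zero => simp [hx0]
  | succ n ih =>
    have hxmem : ∀ i, x i ∈ U := fun i => hpt i (mem_ball_self hs)
    have hA : ‖f (x n)‖ < 1 := by simpa using hfm (hxmem n)
    have hB : ‖f (x (n + 1))‖ < 1 := by simpa using hfm (hxmem (n + 1))
    have hyball : x (n + 1) ∈ ball (x n) s := by
      rw [mem_ball]
      calc dist (x (n+1)) (x n) ≤ s / 2 := hstep n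
      _ < s := by linarith
    have h1 := sp_step hf hfm hs (hpt n) hyball
    have h2 : ‖(f (x (n+1)) - f (x n)) / (1 - (starRingEnd ℂ) (f (x n)) * f (x (n+1)))‖
        ≤ 1 / 2 := by
      refine h1.trans ?_
      rw [div_le_div_iff₀ hs (by norm_num)]
      have := hstep n
      linarith
    have h3 := prop_bound hA hB (by norm_num : (1:ℝ)/2 ≤ 1) h2
    obtain ⟨hT0, hT1⟩ := mobT_iter_mem n
    rw [Function.iterate_succ_apply']
    calc ‖f (x (n+1))‖ ≤ (‖f (x n)‖ + 1/2) / (1 + ‖f (x n)‖ * (1/2)) := h3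
    _ ≤ (mobT^[n] 0 + 1/2) / (1 + mobT^[n] 0 * (1/2)) :=
        mob_avg_mono (norm_nonneg _) hT1.le ih (by norm_num) (by norm_num) le_rfl
    _ = mobT (mobT^[n] 0) := by
        rw [mobT]
        rw [div_eq_div_iff (by nlinarith) (by nlinarith)]
        ring

def chainProp (L : Set ℂ) (ε : ℝ) (n : ℕ) (u v : ℂ) : Prop :=
  ∃ x : ℕ → ℂ, x 0 = u ∧ (∀ i, n ≤ i → x i = v) ∧ (∀ i, x i ∈ L) ∧
    ∀ i, dist (x (i + 1)) (x i) ≤ ε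

lemma chainProp_mono {L : Set ℂ} {ε : ℝ} {n m : ℕ} {u v : ℂ} (h : n ≤ m)
    (hc : chainProp L ε n u v) : chainProp L ε m u v := by
  obtain ⟨x, h0, hs, hm, hd⟩ := hc
  exact ⟨x, h0, fun i hi => hs i (h.trans hi), hm, hd⟩

lemma chainProp_single {L : Set ℂ} {ε : ℝ} {u v : ℂ} (hu : u ∈ L) (hv : v ∈ L)
    (h : dist v u ≤ ε) (hε : 0 ≤ ε) : chainProp L ε 1 u v := by
  refine ⟨fun i => if i = 0 then u else v, by simp, fun i hi => by
    simp only [if_neg (by omega : ¬ i = 0)], fun i => by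
    by_cases h0 : i = 0 <;> simp [h0, hu, hv], fun i => ?_⟩
  by_cases h0 : i = 0 <;> simp [h0, h, hε]

lemma chainProp_trans {L : Set ℂ} {ε : ℝ} {n₁ n₂ : ℕ} {u v w : ℂ}
    (h₁ : chainProp L ε n₁ u v) (h₂ : chainProp L ε n₂ v w) :
    chainProp L ε (n₁ + n₂) u w := by
  obtain ⟨x, hx0, hxs, hxm, hxd⟩ := h₁
  obtain ⟨y, hy0, hys, hym, hyd⟩ := h₂
  refine ⟨fun i => if i < n₁ then x i else y (i - n₁), ?_, ?_, ?_, ?_⟩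
  · by_cases h : 0 < n₁
    · simpa [h] using hx0
    · simp only [Nat.not_lt, Nat.le_zero] at h
      simp [h, hy0, ← hx0, hxs 0 (by omega)]
  · intro i hi
    have : ¬ i < n₁ := by omega
    simp only [this, if_false]
    exact hys _ (by omega)
  · intro i
    by_cases h : i < n₁ <;> simp [h, hxm, hym]
  · intro i
    by_cases h1 : i + 1 < n₁
    · simp [h1, (by omega : i < n₁), hxd i]
    · by_cases h2 : i < n₁
      · have hin : i + 1 = n₁ := by omega
        simp only [h1, h2, if_false, if_true]
        rw [hin, Nat.sub_self, hy0, ← hxs n₁ le_rfl, ← hin]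
        exact hxd i
      · simp only [h1, h2, if_false]
        have : i + 1 - n₁ = (i - n₁) + 1 := by omega
        rw [this]
        exact hyd _

lemma chainProp_uniform {L : Set ℂ} {ε : ℝ} (hL : IsCompact L) (hε : 0 < ε)
    (h : ∀ u ∈ L, ∀ v ∈ L, ∃ n, chainProp L ε n u v) :
    ∃ N : ℕ, ∀ u ∈ L, ∀ v ∈ L, chainProp L ε N u v := by
  classical
  -- choice of a chain length for each pair
  have hch : ∀ p : ℂ × ℂ, ∃ n, p.1 ∈ L → p.2 ∈ L → chainProp L ε n p.1 p.2 := by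
    intro p
    by_cases hp : p.1 ∈ L ∧ p.2 ∈ L
    · obtain ⟨n, hn⟩ := h p.1 hp.1 p.2 hp.2
      exact ⟨n, fun _ _ => hn⟩
    · exact ⟨0, fun h1 h2 => absurd ⟨h1, h2⟩ hp⟩
  choose nf hnf using hch
  have hcov : L ×ˢ L ⊆ ⋃ p : ℂ × ℂ, (if p ∈ L ×ˢ L then ball p.1 ε ×ˢ ball p.2 ε else ∅) := by
    intro p hp
    refine mem_iUnion.2 ⟨p, ?_⟩
    simp only [hp, if_true, mem_prod]
    exact ⟨mem_ball_self hε, mem_ball_self hε⟩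
  obtain ⟨t, ht⟩ := (hL.prod hL).elim_finite_subcover _
    (fun p : ℂ × ℂ => by
      split
      · exact isOpen_ball.prod isOpen_ball
      · exact isOpen_empty) hcov
  refine ⟨(t.sup nf) + 2, ?_⟩
  intro u hu v hv
  have := ht (show (u, v) ∈ L ×ˢ L from ⟨hu, hv⟩)
  rw [mem_iUnion₂] at this
  obtain ⟨p, hpt, hpm⟩ := this
  by_cases hpL : p ∈ L ×ˢ L
  · rw [if_pos hpL] at hpm
    obtain ⟨hpm1, hpm2⟩ := hpm
    have hc1 : chainProp L ε 1 u p.1 :=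
      chainProp_single hu hpL.1 (by rw [dist_comm]; exact (mem_ball.1 hpm1).le) hε.le
    have hc2 : chainProp L ε (nf p) p.1 p.2 := hnf p hpL.1 hpL.2
    have hc3 : chainProp L ε 1 p.2 v :=
      chainProp_single hpL.2 hv (mem_ball.1 hpm2).le hε.le
    have := chainProp_trans (chainProp_trans hc1 hc2) hc3
    exact chainProp_mono (by
      have : nf p ≤ t.sup nf := Finset.le_sup hpt
      omega) this
  · rw [if_neg hpL] at hpm
    exact absurd hpm (notMem_empty _)

lemma chain_exists {D : Set ℂ} (hpc : IsPathConnected D) {φ : ℂ → ℂ}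
    (hφc : ContinuousOn φ D) {ε : ℝ} (hε : 0 < ε) :
    ∀ u ∈ closure (φ '' D), ∀ v ∈ closure (φ '' D),
      ∃ n, chainProp (closure (φ '' D)) ε n u v := by
  intro u hu v hv
  set L := closure (φ '' D) with hL
  have himL : φ '' D ⊆ L := subset_closure
  obtain ⟨b, hb, hub⟩ := Metric.mem_closure_iff.mp hu ε hε
  obtain ⟨c, hc, hvc⟩ := Metric.mem_closure_iff.mp hv ε hε
  obtain ⟨p, hp, rfl⟩ := hb
  obtain ⟨q, hq, rfl⟩ := hc
  obtain ⟨γ, hγ⟩ := hpc.joinedIn p hp q hq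
  have hg : Continuous (φ ∘ γ) := hφc.comp_continuous γ.continuous hγ
  have huc : UniformContinuous (φ ∘ γ) := CompactSpace.uniformContinuous_of_continuous hg
  obtain ⟨η, hη, hηd⟩ := Metric.uniformContinuous_iff.mp huc ε hε
  obtain ⟨n, hn⟩ := exists_nat_one_div_lt hη
  -- the chain along the path
  have h10 : ((⟨1, Set.right_mem_Icc.2 zero_le_one⟩ : unitInterval)) = 1 := Subtype.ext rfl
  have h00 : ((⟨0, Set.left_mem_Icc.2 zero_le_one⟩ : unitInterval)) = 0 := Subtype.ext rfl
  refine ⟨1 + (n + 1) + 1, chainProp_trans (chainProp_trans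
    (chainProp_single hu (himL ⟨p, hp, rfl⟩) (by rw [dist_comm]; exact hub.le) hε.le)
    (?_ : chainProp L ε (n + 1) (φ p) (φ q)))
    (chainProp_single (himL ⟨q, hq, rfl⟩) hv (hvc.le) hε.le)⟩
  refine ⟨fun i => (φ ∘ γ) (Set.projIcc 0 1 zero_le_one ((i : ℝ) / (n + 1))), ?_, ?_, ?_, ?_⟩
  · simp only [Nat.cast_zero, zero_div, Set.projIcc_left, h00, Function.comp_apply]
    rw [γ.source]
  · intro i hi
    have h1 : (1 : ℝ) ≤ (i : ℝ) / (n + 1) := by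
      rw [le_div_iff₀ (by positivity)]
      have : ((n : ℝ) + 1) ≤ (i : ℝ) := by exact_mod_cast hi
      linarith
    simp only [Set.projIcc_of_right_le zero_le_one h1, h10, Function.comp_apply]
    rw [γ.target]
  · intro i
    exact himL ⟨γ _, hγ _, rfl⟩
  · intro i
    have hlip : dist (Set.projIcc 0 1 zero_le_one ((((i+1) : ℕ) : ℝ) / (n + 1)))
        (Set.projIcc 0 1 zero_le_one ((i : ℝ) / (n + 1)))
        ≤ dist ((((i+1) : ℕ) : ℝ) / (n + 1)) ((i : ℝ) / (n + 1)) := by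
      simpa using (LipschitzWith.projIcc (zero_le_one)).dist_le_mul
        ((((i+1) : ℕ) : ℝ) / (n + 1)) ((i : ℝ) / (n + 1))
    have hd : dist ((((i+1) : ℕ) : ℝ) / (n + 1)) ((i : ℝ) / (n + 1)) = 1 / (n+1) := by
      rw [Real.dist_eq, div_sub_div_same]
      push_cast
      rw [add_sub_cancel_left]
      rw [_root_.abs_of_nonneg (by positivity)]
    exact (hηd (lt_of_le_of_lt (hlip.trans_eq hd) hn)).le

end Stmt16Aux

/-- Geometric contraction of diameters: for a holomorphic self-map `φ` of a
simply connected hyperbolic domain `D ⊊ ℂ` whose image is compactly contained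
in `D`, the diameters of the iterated images of a compact set `K ⊆ D` decay
geometrically; in particular they tend to `0` and their sum converges. -/
theorem stmt16 (D : Set ℂ) (hD : IsOpen D) (hDne : D ≠ Set.univ)
    (hDsc : SimplyConnectedSpace D)
    (φ : ℂ → ℂ) (hφ : DifferentiableOn ℂ φ D)
    (hmaps : Set.MapsTo φ D D)
    (hcl : closure (φ '' D) ⊆ D) (hclc : IsCompact (closure (φ '' D)))
    (K : Set ℂ) (hK : IsCompact K) (hKD : K ⊆ D) :
    ∃ C > (0 : ℝ), ∃ l ∈ Set.Ioo (0 : ℝ) 1,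
      (∀ k : ℕ, Metric.diam (φ^[k] '' K) ≤ C * l ^ k) ∧
      Filter.Tendsto (fun k : ℕ => Metric.diam (φ^[k] '' K)) Filter.atTop (nhds 0) ∧
      Summable (fun k : ℕ => Metric.diam (φ^[k] '' K)) := by
  classical
  set L : Set ℂ := closure (φ '' D) with hLdef
  have himL : φ '' D ⊆ L := subset_closure
  -- a uniform radius δ around L inside D
  obtain ⟨δ, hδ, hthick⟩ := hclc.exists_thickening_subset_open hD hcl
  set U : Set ℂ := Metric.thickening (δ/2) L with hUdef
  have hUD : U ⊆ D := (Metric.thickening_mono (by linarith) L).trans hthick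
  have hUL : L ⊆ U := Metric.self_subset_thickening (by linarith) L
  have hUball : ∀ x ∈ L, ball x (δ/2) ⊆ U := fun x hx => Metric.ball_subset_thickening hx _
  have hUbdd : IsBounded U := hclc.isBounded.thickening
  -- maps-to facts
  have hφUL : MapsTo φ U L := fun x hx => himL ⟨x, hUD hx, rfl⟩
  have hφLL : MapsTo φ L L := fun x hx => himL ⟨x, hcl hx, rfl⟩
  have hφUU : MapsTo φ U U := fun x hx => hUL (hφUL hx)
  have hiterL : ∀ k : ℕ, MapsTo φ^[k] L L := fun k => MapsTo.iterate hφLL k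
  -- path connectivity
  haveI := hDsc
  have hpc : IsPathConnected D := isPathConnected_iff_pathConnectedSpace.mpr inferInstance
  -- uniform chains in L
  obtain ⟨N, hN⟩ := chainProp_uniform hclc (by linarith : (0:ℝ) < δ/4)
    (chain_exists hpc hφ.continuousOn (by linarith))
  -- the uniform Schwarz--Pick bound
  set ρ : ℝ := mobT^[N] 0 with hρdef
  obtain ⟨hρ0, hρ1⟩ := mobT_iter_mem N
  have hcore : ∀ f : ℂ → ℂ, DifferentiableOn ℂ f U → MapsTo f U (ball (0:ℂ) 1) →
      ∀ u ∈ L, ∀ v ∈ L, f u = 0 → ‖f v‖ ≤ ρ := by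
    intro f hfd hfm u hu v hv hfu
    obtain ⟨x, hx0, hxs, hxm, hxd⟩ := hN u hu v hv
    have := chain_bound hfd hfm (by linarith : (0:ℝ) < δ/2) x
      (fun i => hUball _ (hxm i))
      (fun i => by have := hxd i; linarith) (by rw [hx0]; exact hfu) N
    rwa [hxs N le_rfl] at this
  set lam : ℝ := (ρ + 1) / 2 with hlam
  have hlam0 : 0 < lam := by rw [hlam]; linarith
  have hlam1 : lam < 1 := by rw [hlam]; linarith
  have hρlam : ρ < lam := by rw [hlam]; linarith
  -- geometric descent
  have hP : ∀ k : ℕ, ∀ f : ℂ → ℂ, DifferentiableOn ℂ f U → MapsTo f U (ball (0:ℂ) 1) →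
      ∀ z ∈ L, ∀ w ∈ L, f (φ^[k] z) = 0 → ‖f (φ^[k] w)‖ ≤ lam ^ k := by
    intro k
    induction k with
    | zero =>
      intro f hfd hfm z hz w hw hfz
      simp only [Function.iterate_zero, id_eq, pow_zero]
      exact le_of_lt (by simpa using hfm (hUL hw))
    | succ k ih =>
      intro f hfd hfm z hz w hw hfz
      have hvan : φ^[k+1] z ∈ L := hiterL (k+1) hz
      have hbd : ∀ x ∈ U, ‖f (φ x)‖ ≤ ρ :=
        fun x hx => hcore f hfd hfm _ hvan _ (hφUL hx) hfz
      set g : ℂ → ℂ := fun x => f (φ x) / (lam : ℂ) with hg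
      have hgd : DifferentiableOn ℂ g U := by
        apply DifferentiableOn.div_const
        exact hfd.comp (hφ.mono hUD) hφUU
      have hgm : MapsTo g U (ball (0:ℂ) 1) := by
        intro x hx
        rw [mem_ball, dist_zero_right, hg]
        simp only [norm_div, Complex.norm_real]
        rw [Real.norm_of_nonneg hlam0.le, div_lt_one hlam0]
        exact lt_of_le_of_lt (hbd x hx) hρlam
      have hgz : g (φ^[k] z) = 0 := by
        rw [hg]
        simp only [← Function.iterate_succ_apply' φ k z, hfz, zero_div]
      have h2 := ih g hgd hgm z hz w hw hgz
      rw [hg] at h2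
      simp only [norm_div, Complex.norm_real, Real.norm_of_nonneg hlam0.le] at h2
      rw [div_le_iff₀ hlam0] at h2
      rw [Function.iterate_succ_apply' φ k w] at *
      calc ‖f (φ (φ^[k] w))‖ ≤ lam ^ k * lam := h2
      _ = lam ^ (k+1) := (pow_succ lam k).symm
  -- final assembly
  have hM : (0:ℝ) < diam U + 1 := by positivity
  have hdist : ∀ k : ℕ, ∀ x ∈ K, ∀ y ∈ K,
      dist (φ^[k+1] x) (φ^[k+1] y) ≤ 2 * (diam U + 1) * lam ^ k := by
    intro k x hx y hy
    have hφx : φ x ∈ L := himL ⟨x, hKD hx, rfl⟩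
    have hφy : φ y ∈ L := himL ⟨y, hKD hy, rfl⟩
    set c : ℂ := φ^[k] (φ x) with hc
    have hcL : c ∈ L := hiterL k hφx
    set f₀ : ℂ → ℂ := fun w => (w - c) / ((2 * (diam U + 1) : ℝ) : ℂ) with hf₀
    have hf₀d : DifferentiableOn ℂ f₀ U := (differentiableOn_id.sub_const c).div_const _
    have hf₀m : MapsTo f₀ U (ball (0:ℂ) 1) := by
      intro w hw
      rw [mem_ball, dist_zero_right, hf₀]
      simp only [norm_div, Complex.norm_real]
      rw [Real.norm_of_nonneg (by positivity), div_lt_one (by positivity)]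
      have : ‖w - c‖ ≤ diam U := by
        rw [← dist_eq_norm]
        exact dist_le_diam_of_mem hUbdd hw (hUL hcL)
      linarith [Metric.diam_nonneg (s := U)]
    have hf₀z : f₀ (φ^[k] (φ x)) = 0 := by rw [hf₀]; simp [← hc]
    have := hP k f₀ hf₀d hf₀m (φ x) hφx (φ y) hφy hf₀z
    rw [hf₀] at this
    simp only [norm_div, Complex.norm_real, Real.norm_of_nonneg (show (0:ℝ) ≤ 2*(diam U + 1) by positivity)] at this
    rw [div_le_iff₀ (by positivity)] at this
    rw [Function.iterate_succ_apply φ k x, Function.iterate_succ_apply φ k y]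
    rw [dist_comm, dist_eq_norm]
    calc ‖φ^[k] (φ y) - c‖ ≤ lam ^ k * (2 * (diam U + 1)) := this
    _ = 2 * (diam U + 1) * lam ^ k := by ring
  set C : ℝ := max (diam K + 1) (2 * (diam U + 1) / lam) with hC
  have hC0 : 0 < C := lt_max_of_lt_left (by positivity)
  have hbound : ∀ k : ℕ, diam (φ^[k] '' K) ≤ C * lam ^ k := by
    intro k
    match k with
    | 0 =>
      simp only [Function.iterate_zero, Set.image_id, pow_zero, mul_one]
      calc diam K ≤ diam K + 1 := by linarith
      _ ≤ C := le_max_left _ _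
    | (k+1) =>
      apply Metric.diam_le_of_forall_dist_le (by positivity)
      rintro a ⟨x, hx, rfl⟩ b ⟨y, hy, rfl⟩
      calc dist (φ^[k+1] x) (φ^[k+1] y) ≤ 2 * (diam U + 1) * lam ^ k := hdist k x hx y hy
      _ = (2 * (diam U + 1) / lam) * lam ^ (k+1) := by
          field_simp
          ring
      _ ≤ C * lam ^ (k+1) :=
          mul_le_mul_of_nonneg_right (le_max_right _ _) (by positivity)
  refine ⟨C, hC0, lam, ⟨hlam0, hlam1⟩, hbound, ?_, ?_⟩
  · have h1 := (tendsto_pow_atTop_nhds_zero_of_lt_one hlam0.le hlam1).const_mul C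
    rw [mul_zero] at h1
    exact squeeze_zero (fun k => Metric.diam_nonneg) hbound h1
  · exact Summable.of_nonneg_of_le (fun k => Metric.diam_nonneg) hbound
      ((summable_geometric_of_lt_one hlam0.le hlam1).mul_left C)
end
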